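/- Let f^in(ψ) = (γ_in/2)(ψ − ψ_in)² + β_in and f^out(ψ) = (γ_out/2)(ψ − ψ_out)² + β_out with γ_in, γ_out > 0, and suppose m, c, a, b ∈ ℝ satisfy the common tangent conditions f^in(a) = m a + c, γ_in (a − ψ_in) = m, f^out(b) = m b + c, γ_out (b − ψ_out) = m, with a < b. Let L > 0, x₀ ∈ (0, L), and ψ⁰_in ∈ ℝ with ψ⁰_in ≠ a, and set x_f = x₀ (b − ψ⁰_in)/(b − a); assume 0 < x_f < L. Then the total osmotic free energy strictly decreases from the initial state to the equilibrium state: x_f f^in(a) + (L − x_f) f^out(b) < x₀ f^in(ψ⁰_in) + (L − x₀) f^out(b). -/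
import Mathlib


/-- Interior osmotic free energy density `f^in(ψ) = (γ_in/2)(ψ - ψ_in)² + β_in`. -/
noncomputable def fIn (γin ψin βin : ℝ) (u : ℝ) : ℝ := γin / 2 * (u - ψin) ^ 2 + βin

/-- Exterior osmotic free energy density `f^out(ψ) = (γ_out/2)(ψ - ψ_out)² + β_out`. -/
noncomputable def fOut (γout ψout βout : ℝ) (u : ℝ) : ℝ := γout / 2 * (u - ψout) ^ 2 + βout

/-- with a common tangent `t ↦ m t + c` of `f^in` (touching at
`a`) and `f^out` (touching at `b`), `a < b`, and the mass-conserving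
equilibrium interface position `x_f = x₀ (b - ψ⁰_in)/(b - a)`, the total
osmotic free energy strictly decreases from the initial state (interface `x₀`,
interior concentration `ψ⁰_in ≠ a`, exterior concentration `b`) to the
equilibrium state (interface `x_f`, concentrations `a` and `b`). -/
theorem osmotic_energy_strict_decrease
    (γin ψin βin γout ψout βout : ℝ) (hγin : 0 < γin) (hγout : 0 < γout)
    (m c a b : ℝ)
    (htan1 : fIn γin ψin βin a = m * a + c)
    (htan2 : γin * (a - ψin) = m)
    (htan3 : fOut γout ψout βout b = m * b + c)
    (htan4 : γout * (b - ψout) = m)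
    (hab : a < b)
    (L x₀ ψ0in : ℝ) (hL : 0 < L) (hx₀ : 0 < x₀) (hx₀L : x₀ < L)
    (hψ0 : ψ0in ≠ a)
    (xf : ℝ) (hxf : xf = x₀ * (b - ψ0in) / (b - a))
    (hxf0 : 0 < xf) (hxfL : xf < L) :
    xf * fIn γin ψin βin a + (L - xf) * fOut γout ψout βout b <
      x₀ * fIn γin ψin βin ψ0in + (L - x₀) * fOut γout ψout βout b := by
  have hba : b - a ≠ 0 := sub_ne_zero.2 hab.ne'
  have hxf' : xf * (b - a) = x₀ * (b - ψ0in) := by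
    rw [hxf]; field_simp
  have key : fIn γin ψin βin ψ0in = m * ψ0in + c + γin / 2 * (ψ0in - a) ^ 2 := by
    unfold fIn at htan1 ⊢
    linear_combination htan1 + (ψ0in - a) * htan2
  have hne : ψ0in - a ≠ 0 := sub_ne_zero.2 hψ0
  have hsq : 0 < (ψ0in - a) ^ 2 := by positivity
  have h2 : m * (xf * (b - a)) = m * (x₀ * (b - ψ0in)) := by rw [hxf']
  rw [htan1, htan3, key]
  nlinarith [mul_pos hγin (mul_pos hx₀ hsq), h2]
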